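/- The cofactor vector φ is an eigenvector on the spectral curve: if y ≠ 0 and det(x·𝟙 + L) = 0 (equivalently, (x,y) lies on the spectral curve f̃(x,y) = y·det(x·𝟙 + L) = 0), then (x·𝟙 + L)·φ(x,y) = 0; i.e., φ(x,y) is an eigenvector of L with eigenvalue −x. -/
import Mathlib

open Matrix

/-- Cofactor expansion: determinant of a matrix whose `j`-th column has been
replaced by the standard basis vector supported at the last row. -/
lemma cramer_single_last {n : ℕ} (A : Matrix (Fin (n+1)) (Fin (n+1)) ℂ) (j : Fin (n+1)) :
    Matrix.cramer A (Pi.single (Fin.last n) 1) j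
      = (-1) ^ (n + (j : ℕ)) * (A.submatrix Fin.castSucc j.succAbove).det := by
  rw [Matrix.cramer_apply, Matrix.det_succ_column _ j]
  rw [Finset.sum_eq_single (Fin.last n)]
  · have hcol : (A.updateCol j (Pi.single (Fin.last n) 1)).submatrix
        (Fin.last n).succAbove j.succAbove = A.submatrix Fin.castSucc j.succAbove := by
      ext r c
      simp [Matrix.updateCol_apply, Fin.succAbove_ne j c, Fin.succAbove_last]
    rw [hcol]
    simp [Fin.val_last]
  · intro b _ hb
    simp [Matrix.updateCol_apply, Pi.single_apply, hb]
  · simp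

/-- The permutation of `Fin (m+1)` sending `j ↦ m`, fixing `c < j`, and
sending `c ↦ c - 1` for `c > j`. -/
noncomputable def movePerm {m : ℕ} (j : Fin (m+1)) : Equiv.Perm (Fin (m+1)) :=
  Fin.revPerm * (Fin.cycleRange j.rev) * Fin.revPerm

lemma movePerm_apply_self {m : ℕ} (j : Fin (m+1)) : movePerm j j = Fin.last m := by
  simp only [movePerm, Equiv.Perm.mul_apply, Fin.revPerm_apply]
  rw [Fin.cycleRange_of_eq rfl]
  ext
  simp [Fin.val_rev]

lemma movePerm_apply_of_lt {m : ℕ} {j c : Fin (m+1)} (h : c < j) : movePerm j c = c := by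
  simp only [movePerm, Equiv.Perm.mul_apply, Fin.revPerm_apply]
  rw [Fin.cycleRange_of_gt (Fin.rev_lt_rev.mpr h), Fin.rev_rev]

lemma coe_movePerm_apply_of_gt {m : ℕ} {j c : Fin (m+1)} (h : j < c) :
    (movePerm j c : ℕ) = (c : ℕ) - 1 := by
  simp only [movePerm, Equiv.Perm.mul_apply, Fin.revPerm_apply]
  rw [Fin.cycleRange_of_lt (Fin.rev_lt_rev.mpr h)]
  have hc : 0 < (c : ℕ) := lt_of_le_of_lt (Nat.zero_le _) h
  have hrev : ((c.rev + 1 : Fin (m+1)) : ℕ) = (c.rev : ℕ) + 1 := by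
    rw [Fin.val_add_one]
    have : c.rev ≠ Fin.last m := by
      intro hrl
      rw [Fin.rev_eq_iff, Fin.rev_last] at hrl
      simp [hrl] at hc
    simp [this]
  rw [Fin.val_rev, hrev, Fin.val_rev]
  omega

lemma sign_movePerm {m : ℕ} (j : Fin (m+1)) :
    Equiv.Perm.sign (movePerm j) = (-1) ^ ((m : ℕ) - (j : ℕ)) := by
  have key : ∀ u v : ℤˣ, u * v * u = v := fun u v => by
    rw [mul_comm u v, mul_assoc, Int.units_mul_self, mul_one]
  rw [movePerm, _root_.map_mul, _root_.map_mul, key, Fin.sign_cycleRange]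
  congr 1
  rw [Fin.val_rev]
  omega

lemma succAbove_movePerm {m : ℕ} (j c : Fin (m+1)) :
    (Fin.castSucc j).succAbove (movePerm j c)
      = if c = j then Fin.last (m+1) else Fin.castSucc c := by
  rcases lt_trichotomy c j with h | h | h
  · rw [movePerm_apply_of_lt h, if_neg h.ne,
      Fin.succAbove_of_castSucc_lt _ _ (Fin.castSucc_lt_castSucc_iff.mpr h)]
  · subst h
    rw [movePerm_apply_self, if_pos rfl,
      Fin.succAbove_of_le_castSucc _ _ (Fin.castSucc_le_castSucc_iff.mpr (Fin.le_last _)),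
      Fin.succ_last]
  · have hval : (movePerm j c : ℕ) = (c : ℕ) - 1 := coe_movePerm_apply_of_gt h
    have hle : Fin.castSucc j ≤ Fin.castSucc (movePerm j c) := by
      rw [Fin.castSucc_le_castSucc_iff, Fin.le_def, hval]
      omega
    rw [Fin.succAbove_of_le_castSucc _ _ hle, if_neg h.ne']
    ext
    simp only [Fin.val_succ, hval, Fin.coe_castSucc]
    have : 0 < (c : ℕ) := lt_of_le_of_lt (Nat.zero_le _) h
    omega

lemma det_replace_eq {m : ℕ} (A : Matrix (Fin (m+2)) (Fin (m+2)) ℂ) (j : Fin (m+1)) :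
    (Matrix.of fun r c : Fin (m+1) =>
        if c = j then A r.castSucc (Fin.last (m+1)) else A r.castSucc c.castSucc).det
      = (-1) ^ ((m : ℕ) - (j : ℕ))
          * (A.submatrix Fin.castSucc (Fin.castSucc j).succAbove).det := by
  have hmat : (Matrix.of fun r c : Fin (m+1) =>
        if c = j then A r.castSucc (Fin.last (m+1)) else A r.castSucc c.castSucc)
      = (A.submatrix Fin.castSucc (Fin.castSucc j).succAbove).submatrix id (movePerm j) := by
    ext r c
    simp only [Matrix.of_apply, Matrix.submatrix_apply, id_eq, succAbove_movePerm]
    split <;> rfl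
  rw [hmat, Matrix.det_permute', sign_movePerm]
  push_cast
  ring

/-- The Lax matrix `L(I;V)` of the periodic discrete Toda lattice (0-indexed:
row/column `i : Fin (g+1)` corresponds to the 1-indexed `i+1`).  Its entries are
`L_{ii} = I_{i+1} + V_i` (cyclically, so the last diagonal entry is
`I_1 + V_{g+1}`), `L_{i,i+1} = 1`, `L_{i+1,i} = I_{i+1} V_{i+1}`,
`L_{1,g+1} = (-1)^g I_1 V_1 / y`, `L_{g+1,1} = (-1)^g y`,
all other entries `0`. -/
noncomputable def todaLax (g : ℕ) (I V : Fin (g + 1) → ℂ) (y : ℂ) :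
    Matrix (Fin (g + 1)) (Fin (g + 1)) ℂ :=
  Matrix.of fun i j =>
    (if j = i then I (i + 1) + V i else 0)
    + (if (i : ℕ) + 1 = (j : ℕ) then 1 else 0)
    + (if (j : ℕ) + 1 = (i : ℕ) then I i * V i else 0)
    + (if (i : ℕ) = 0 ∧ (j : ℕ) = g then (-1) ^ g * I 0 * V 0 / y else 0)
    + (if (i : ℕ) = g ∧ (j : ℕ) = 0 then (-1) ^ g * y else 0)

/-- `A = x·𝟙_{g+1} + L`. -/
noncomputable def todaA (g : ℕ) (I V : Fin (g + 1) → ℂ) (x y : ℂ) :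
    Matrix (Fin (g + 1)) (Fin (g + 1)) ℂ :=
  x • (1 : Matrix (Fin (g + 1)) (Fin (g + 1)) ℂ) + todaLax g I V y

/-- For `i = 1, …, g` (here `i : Fin g`), `φ_i(x,y)` is the determinant of the
`g × g` matrix obtained from the first `g` rows of `A` by replacing its `i`-th
column with the `(g+1)`-th column of `A`, all other columns unchanged and in
place. -/
noncomputable def todaPhi (g : ℕ) (I V : Fin (g + 1) → ℂ) (x y : ℂ) (i : Fin g) : ℂ :=
  (Matrix.of fun r c : Fin g =>
    if c = i then todaA g I V x y r.castSucc (Fin.last g)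
    else todaA g I V x y r.castSucc c.castSucc).det

/-- `φ_{g+1}(x) = det(x·𝟙_g + L_Λ̄)`, where `L_Λ̄` is the top-left `g × g`
block of `L`. -/
noncomputable def todaPhiLast (g : ℕ) (I V : Fin (g + 1) → ℂ) (x y : ℂ) : ℂ :=
  (x • (1 : Matrix (Fin g) (Fin g) ℂ) +
    (todaLax g I V y).submatrix Fin.castSucc Fin.castSucc).det

/-- On the spectral curve (`y ≠ 0` and `det(x·𝟙 + L) = 0`), the cofactor
vector `φ = (φ_1, …, φ_g, -φ_{g+1})ᵀ` satisfies `(x·𝟙 + L)·φ(x,y) = 0`, i.e.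
`φ(x,y)` is an eigenvector of `L` with eigenvalue `-x`. -/

theorem todaPhi_eigenvector (g : ℕ) (hg : 1 ≤ g) (I V : Fin (g + 1) → ℂ)
    (x y : ℂ) (hy : y ≠ 0) (hdet : (todaA g I V x y).det = 0) :
    (todaA g I V x y).mulVec
        (fun j : Fin (g + 1) =>
          if h : (j : ℕ) < g then todaPhi g I V x y ⟨j, h⟩
          else -todaPhiLast g I V x y) = 0 := by
  obtain ⟨m, rfl⟩ : ∃ m, g = m + 1 := ⟨g - 1, by omega⟩
  set A := todaA (m + 1) I V x y with hA
  have key : (fun j : Fin (m + 1 + 1) =>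
        if h : (j : ℕ) < m + 1 then todaPhi (m + 1) I V x y ⟨j, h⟩
        else -todaPhiLast (m + 1) I V x y)
      = -(Matrix.cramer A (Pi.single (Fin.last (m + 1)) 1)) := by
    funext j
    by_cases h : (j : ℕ) < m + 1
    · rw [dif_pos h]
      set j' : Fin (m + 1) := ⟨j, h⟩ with hj'
      have hj : j = Fin.castSucc j' := by ext; rfl
      rw [Pi.neg_apply, hj, cramer_single_last]
      have hphi : todaPhi (m + 1) I V x y j'
          = (-1 : ℂ) ^ ((m : ℕ) - (j' : ℕ))
            * (A.submatrix Fin.castSucc (Fin.castSucc j').succAbove).det := by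
        rw [todaPhi, ← hA, det_replace_eq]
      rw [hphi]
      have hcoe : ((Fin.castSucc j' : Fin (m + 2)) : ℕ) = (j' : ℕ) := rfl
      rw [hcoe]
      have hexp : (m + 1) + (j' : ℕ) = ((m : ℕ) - (j' : ℕ)) + (2 * (j' : ℕ) + 1) := by
        have := j'.is_lt; omega
      rw [hexp, pow_add]
      have : (-1 : ℂ) ^ (2 * (j' : ℕ) + 1) = -1 := by
        rw [pow_succ, pow_mul, neg_one_sq, one_pow, one_mul]
      rw [this]
      ring
    · rw [dif_neg h]
      have hj : j = Fin.last (m + 1) := by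
        ext; have := j.is_lt; simp only [Fin.val_last]; omega
      rw [Pi.neg_apply, hj, cramer_single_last, Fin.succAbove_last]
      have hcoe : ((Fin.last (m + 1) : Fin (m + 2)) : ℕ) = m + 1 := rfl
      rw [hcoe]
      have hpow : (-1 : ℂ) ^ ((m + 1) + (m + 1)) = 1 := by
        rw [← two_mul, pow_mul, neg_one_sq, one_pow]
      rw [hpow, one_mul]
      have hsub : A.submatrix Fin.castSucc Fin.castSucc
          = x • (1 : Matrix (Fin (m + 1)) (Fin (m + 1)) ℂ)
            + (todaLax (m + 1) I V y).submatrix Fin.castSucc Fin.castSucc := by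
        ext i k
        by_cases hik : i = k <;>
          simp [hA, todaA, Matrix.one_apply, hik, Fin.castSucc_inj]
      rw [todaPhiLast, ← hsub]
  rw [key, Matrix.mulVec_neg, Matrix.mulVec_cramer, hdet, zero_smul, neg_zero]
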